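/- For every integer C ≥ 2, every C-class confusion matrix M with Σ_j m_ji/n_j > 0 for each i satisfies 0 ≤ κ̂_a(M) ≤ 1, and for every C both bounds are attained: κ̂_a(M) = 1 for any diagonal confusion matrix with m_ii = n_i for all i, and κ̂_a(M) = 0 for any confusion matrix with all diagonal entries equal to 0 and Σ_j m_ji/n_j > 0 for each i. Hence the lower and upper bounds of mAURPC-OVA do not depend on the number of classes C. -/

import Mathlib

open Finset

/-- The mAURPC-OVA index `κ̂_a` of a `C`-class confusion matrix `m`, where
`n_i` is the `i`-th row sum. -/
noncomputable def mkappaOVA (C : ℕ) (m : Fin C → Fin C → ℕ) : ℝ :=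
  (1 / (2 * (C : ℝ))) *
    ∑ i, (((m i i : ℝ) / (∑ j, (m i j : ℝ))) /
        (∑ j, (m j i : ℝ) / (∑ l, (m j l : ℝ)))
      + (m i i : ℝ) / (∑ j, (m i j : ℝ)))

/-- For every `C ≥ 2`, every `C`-class confusion matrix with
`Σ_j m_ji/n_j > 0` for each `i` satisfies `0 ≤ κ̂_a(M) ≤ 1`; any diagonal confusion
matrix attains `1`, and any confusion matrix with zero diagonal and
`Σ_j m_ji/n_j > 0` for each `i` attains `0`. Hence the bounds of mAURPC-OVA do not
depend on the number of classes. -/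
theorem mkappaOVA_bounds (C : ℕ) (hC : 2 ≤ C) :
    (∀ m : Fin C → Fin C → ℕ, (∀ i, 0 < ∑ j, m i j) →
      (∀ i, 0 < ∑ j, (m j i : ℝ) / (∑ l, (m j l : ℝ))) →
      0 ≤ mkappaOVA C m ∧ mkappaOVA C m ≤ 1) ∧
    (∀ m : Fin C → Fin C → ℕ, (∀ i, 0 < ∑ j, m i j) →
      (∀ i j, i ≠ j → m i j = 0) → mkappaOVA C m = 1) ∧
    (∀ m : Fin C → Fin C → ℕ, (∀ i, 0 < ∑ j, m i j) →
      (∀ i, 0 < ∑ j, (m j i : ℝ) / (∑ l, (m j l : ℝ))) →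
      (∀ i, m i i = 0) → mkappaOVA C m = 0) := by
  refine ⟨?_, ?_, ?_⟩
  · intro m hn hS
    have hCpos : (0:ℝ) < 2 * (C:ℝ) := by
      have : (0:ℝ) < (C:ℝ) := by exact_mod_cast lt_of_lt_of_le (by norm_num) hC
      linarith
    have hterm : ∀ i : Fin C,
        0 ≤ ((m i i : ℝ) / (∑ j, (m i j : ℝ))) /
            (∑ j, (m j i : ℝ) / (∑ l, (m j l : ℝ)))
          + (m i i : ℝ) / (∑ j, (m i j : ℝ)) ∧
        ((m i i : ℝ) / (∑ j, (m i j : ℝ))) /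
            (∑ j, (m j i : ℝ) / (∑ l, (m j l : ℝ)))
          + (m i i : ℝ) / (∑ j, (m i j : ℝ)) ≤ 2 := by
      intro i
      have hnpos : (0:ℝ) < ∑ j, (m i j : ℝ) := by
        have := hn i
        exact_mod_cast this
      have hr0 : (0:ℝ) ≤ (m i i : ℝ) / (∑ j, (m i j : ℝ)) := by positivity
      have hr1 : (m i i : ℝ) / (∑ j, (m i j : ℝ)) ≤ 1 := by
        rw [div_le_one hnpos]
        exact Finset.single_le_sum (f := fun j => (m i j : ℝ))
          (fun j _ => by positivity) (Finset.mem_univ i)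
      have hSi := hS i
      have hrS : (m i i : ℝ) / (∑ j, (m i j : ℝ)) ≤
          ∑ j, (m j i : ℝ) / (∑ l, (m j l : ℝ)) :=
        Finset.single_le_sum (f := fun j => (m j i : ℝ) / (∑ l, (m j l : ℝ)))
          (fun j _ => by positivity) (Finset.mem_univ i)
      constructor
      · have : (0:ℝ) ≤ ((m i i : ℝ) / (∑ j, (m i j : ℝ))) /
            (∑ j, (m j i : ℝ) / (∑ l, (m j l : ℝ))) := by positivity
        linarith
      · have h1 : ((m i i : ℝ) / (∑ j, (m i j : ℝ))) /
            (∑ j, (m j i : ℝ) / (∑ l, (m j l : ℝ))) ≤ 1 := by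
          rw [div_le_one hSi]; exact hrS
        linarith
    constructor
    · unfold mkappaOVA
      have : 0 ≤ ∑ i, (((m i i : ℝ) / (∑ j, (m i j : ℝ))) /
          (∑ j, (m j i : ℝ) / (∑ l, (m j l : ℝ)))
        + (m i i : ℝ) / (∑ j, (m i j : ℝ))) :=
        Finset.sum_nonneg fun i _ => (hterm i).1
      positivity
    · unfold mkappaOVA
      have hsum : ∑ i, (((m i i : ℝ) / (∑ j, (m i j : ℝ))) /
          (∑ j, (m j i : ℝ) / (∑ l, (m j l : ℝ)))
        + (m i i : ℝ) / (∑ j, (m i j : ℝ))) ≤ 2 * (C:ℝ) := by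
        calc _ ≤ ∑ _i : Fin C, (2:ℝ) :=
              Finset.sum_le_sum fun i _ => (hterm i).2
          _ = 2 * (C:ℝ) := by simp [mul_comm]
      rw [one_div, inv_mul_le_iff₀ hCpos, mul_one]
      exact hsum
  · intro m hn hd
    have hCpos : (0:ℝ) < 2 * (C:ℝ) := by
      have : (0:ℝ) < (C:ℝ) := by exact_mod_cast lt_of_lt_of_le (by norm_num) hC
      linarith
    have hrow : ∀ i : Fin C, (∑ j, (m i j : ℝ)) = (m i i : ℝ) := by
      intro i
      rw [Finset.sum_eq_single i]
      · intro j _ hj; exact_mod_cast congrArg Nat.cast (hd i j (Ne.symm hj))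
      · intro h; exact absurd (Finset.mem_univ i) h
    have hdiag : ∀ i : Fin C, (0:ℝ) < (m i i : ℝ) := by
      intro i
      have := hn i
      have h2 : 0 < ∑ j, (m i j : ℝ) := by exact_mod_cast this
      rwa [hrow i] at h2
    have hr : ∀ i : Fin C, (m i i : ℝ) / (∑ j, (m i j : ℝ)) = 1 := by
      intro i; rw [hrow i, div_self (ne_of_gt (hdiag i))]
    have hScol : ∀ i : Fin C, (∑ j, (m j i : ℝ) / (∑ l, (m j l : ℝ))) = 1 := by
      intro i
      rw [Finset.sum_eq_single i]
      · exact hr i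
      · intro j _ hj
        have : m j i = 0 := hd j i hj
        simp [this]
      · intro h; exact absurd (Finset.mem_univ i) h
    unfold mkappaOVA
    have : ∑ i : Fin C, (((m i i : ℝ) / (∑ j, (m i j : ℝ))) /
        (∑ j, (m j i : ℝ) / (∑ l, (m j l : ℝ)))
      + (m i i : ℝ) / (∑ j, (m i j : ℝ))) = ∑ _i : Fin C, (2:ℝ) := by
      refine Finset.sum_congr rfl fun i _ => ?_
      rw [hr i, hScol i]; norm_num
    rw [this]
    simp only [Finset.sum_const, Finset.card_univ, Fintype.card_fin, nsmul_eq_mul]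
    field_simp
  · intro m hn hS hd
    unfold mkappaOVA
    have : ∑ i : Fin C, (((m i i : ℝ) / (∑ j, (m i j : ℝ))) /
        (∑ j, (m j i : ℝ) / (∑ l, (m j l : ℝ)))
      + (m i i : ℝ) / (∑ j, (m i j : ℝ))) = 0 := by
      refine Finset.sum_eq_zero fun i _ => ?_
      simp [hd i]
    rw [this, mul_zero]
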